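/- In an enhanced Leibniz algebra, the anomaly γ is totally antisymmetric in its three arguments; equivalently, for all u, v ∈ V one has γ(v,v,u) = 0, γ(v,u,v) = 0, and γ(u,v,v) = 0. -/
import Mathlib


/-- The anomaly `γ` of an enhanced Leibniz algebra. -/
def elaGamma {K V W : Type*} [Field K] [AddCommGroup V] [Module K V]
    [AddCommGroup W] [Module K W]
    (t : W →ₗ[K] V) (br : V →ₗ[K] V →ₗ[K] V) (c : V →ₗ[K] V →ₗ[K] W)
    (v₁ v₂ v₃ : V) : W :=
  - c v₁ (br v₂ v₃) + c (br v₁ v₂) v₃ + c v₂ (br v₁ v₃)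
    - c (t (c v₂ v₃)) v₁ - c (t (c v₁ v₂)) v₃ + c (t (c v₁ v₃)) v₂

/-- In an enhanced Leibniz algebra, the anomaly `γ` is totally antisymmetric in its
three arguments; equivalently it vanishes whenever two arguments coincide. -/
theorem ela_gamma_totally_antisymmetric
    {K : Type*} [Field K] (h2 : (2 : K) ≠ 0)
    {V W : Type*} [AddCommGroup V] [Module K V] [AddCommGroup W] [Module K W]
    (t : W →ₗ[K] V) (br : V →ₗ[K] V →ₗ[K] V) (c : V →ₗ[K] V →ₗ[K] W)
    (leib : ∀ v₁ v₂ v₃ : V, br v₁ (br v₂ v₃) = br (br v₁ v₂) v₃ + br v₂ (br v₁ v₃))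
    (axa : ∀ (w : W) (v : V), br (t w) v = 0)
    (axb : ∀ w : W, c (t w) (t w) = 0)
    (axc : ∀ u v : V, (2 : K)⁻¹ • (c u (br v v) + c (br v v) u)
            = (2 : K)⁻¹ • (c v (br u v) + c (br u v) v))
    (axd : ∀ v : V, br v v = t (c v v)) :
    (∀ u v : V, elaGamma t br c v v u = 0) ∧
    (∀ u v : V, elaGamma t br c v u v = 0) ∧
    (∀ u v : V, elaGamma t br c u v v = 0) ∧
    (∀ v₁ v₂ v₃ : V, elaGamma t br c v₁ v₂ v₃ = - elaGamma t br c v₂ v₁ v₃) ∧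
    (∀ v₁ v₂ v₃ : V, elaGamma t br c v₁ v₂ v₃ = - elaGamma t br c v₁ v₃ v₂) ∧
    (∀ v₁ v₂ v₃ : V, elaGamma t br c v₁ v₂ v₃ = - elaGamma t br c v₃ v₂ v₁) := by
  -- Polarized form of axiom (c): since char ≠ 2 we may cancel the (1/2).
  have star : ∀ u v : V,
      c u (br v v) = c v (br u v) + c (br u v) v - c (br v v) u := by
    intro u v
    have h := smul_right_injective W (inv_ne_zero h2) (axc u v)
    exact eq_sub_of_add_eq h
  -- Polarization of axiom (d).
  have tri : ∀ u v : V, t (c u v) = br u v + br v u - t (c v u) := by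
    intro u v
    have h := axd (u + v)
    simp only [map_add, LinearMap.add_apply] at h
    rw [axd u, axd v] at h
    have h' := sub_eq_zero_of_eq h.symm
    rw [← sub_eq_zero, ← h']
    abel
  -- γ(v,v,u) = 0
  have z12 : ∀ u v : V, elaGamma t br c v v u = 0 := by
    intro u v
    simp only [elaGamma, ← axd]
    abel
  -- γ(v,u,v) = 0
  have z13 : ∀ u v : V, elaGamma t br c v u v = 0 := by
    intro u v
    simp only [elaGamma, ← axd]
    rw [tri u v, star u v]
    simp only [map_add, map_sub, LinearMap.add_apply, LinearMap.sub_apply]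
    abel
  -- γ(u,v,v) = 0
  have z23 : ∀ u v : V, elaGamma t br c u v v = 0 := by
    intro u v
    simp only [elaGamma, ← axd]
    rw [star u v]
    abel
  -- multilinearity expansions for polarization
  have exp12 : ∀ a b w : V, elaGamma t br c (a + b) (a + b) w =
      elaGamma t br c a a w + elaGamma t br c a b w +
      elaGamma t br c b a w + elaGamma t br c b b w := by
    intro a b w
    simp only [elaGamma, map_add, LinearMap.add_apply]
    abel
  have exp23 : ∀ w a b : V, elaGamma t br c w (a + b) (a + b) =
      elaGamma t br c w a a + elaGamma t br c w a b +
      elaGamma t br c w b a + elaGamma t br c w b b := by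
    intro w a b
    simp only [elaGamma, map_add, LinearMap.add_apply]
    abel
  have anti12 : ∀ v₁ v₂ v₃ : V,
      elaGamma t br c v₁ v₂ v₃ = - elaGamma t br c v₂ v₁ v₃ := by
    intro a b w
    have h := exp12 a b w
    rw [z12 w (a + b), z12 w a, z12 w b] at h
    have h' : elaGamma t br c a b w + elaGamma t br c b a w = 0 := by
      simpa using h.symm
    exact eq_neg_of_add_eq_zero_left h'
  have anti23 : ∀ v₁ v₂ v₃ : V,
      elaGamma t br c v₁ v₂ v₃ = - elaGamma t br c v₁ v₃ v₂ := by
    intro w a b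
    have h := exp23 w a b
    rw [z23 w (a + b), z23 w a, z23 w b] at h
    have h' : elaGamma t br c w a b + elaGamma t br c w b a = 0 := by
      simpa using h.symm
    exact eq_neg_of_add_eq_zero_left h'
  refine ⟨z12, z13, z23, anti12, anti23, fun v₁ v₂ v₃ => ?_⟩
  rw [anti12, anti23 v₂ v₁ v₃, anti12 v₂ v₃ v₁]
  abel
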